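/- Let R be a commutative ring and let f = Σ_{i=0}^{n} a_i x^i and g = Σ_{j=0}^{n} b_j x^j be polynomials of degree at most n over R. Then f'·g − f·g' = Σ_{m=0}^{2n−2} ( Σ_{i+j=m+1, 0≤i<j≤n} (i−j)·(a_i b_j − a_j b_i) ) x^m, where f', g' denote formal derivatives. -/

import Mathlib

open Polynomial

private lemma wp_term {R : Type*} [CommRing R] (i j : ℕ) (u v : R) :
    derivative (C u * X ^ i) * (C v * X ^ j) - (C u * X ^ i) * derivative (C v * X ^ j)
    = C (((i : ℤ) - (j : ℤ)) • (u * v)) * X ^ (i + j - 1) := by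
  rw [derivative_C_mul, derivative_C_mul, derivative_X_pow, derivative_X_pow,
    zsmul_eq_mul]
  push_cast
  rcases i with _ | i <;> rcases j with _ | j <;>
    simp <;> ring_nf

theorem wronskian_plucker (R : Type*) [CommRing R] (n : ℕ) (a b : ℕ → R) :
    derivative (∑ i ∈ Finset.range (n+1), C (a i) * X ^ i)
        * (∑ j ∈ Finset.range (n+1), C (b j) * X ^ j)
      - (∑ i ∈ Finset.range (n+1), C (a i) * X ^ i)
        * derivative (∑ j ∈ Finset.range (n+1), C (b j) * X ^ j)
      = ∑ m ∈ Finset.range (2 * n - 1),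
          C (∑ p ∈ (Finset.range (n+1) ×ˢ Finset.range (n+1)).filter
                (fun p => p.1 + p.2 = m + 1 ∧ p.1 < p.2),
              ((p.1 : ℤ) - (p.2 : ℤ)) • (a p.1 * b p.2 - a p.2 * b p.1))
            * X ^ m := by
  classical
  set S := Finset.range (n+1) with hS
  set F : ℕ × ℕ → R[X] := fun p =>
    C (((p.1 : ℤ) - (p.2 : ℤ)) • (a p.1 * b p.2)) * X ^ (p.1 + p.2 - 1) with hF
  -- Step 1: LHS as a sum over S ×ˢ S
  have hL : derivative (∑ i ∈ S, C (a i) * X ^ i) * (∑ j ∈ S, C (b j) * X ^ j)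
      - (∑ i ∈ S, C (a i) * X ^ i) * derivative (∑ j ∈ S, C (b j) * X ^ j)
      = ∑ p ∈ S ×ˢ S, F p := by
    rw [derivative_sum, derivative_sum, Finset.sum_mul_sum, Finset.sum_mul_sum,
      ← Finset.sum_sub_distrib]
    rw [Finset.sum_product]
    refine Finset.sum_congr rfl fun i _ => ?_
    rw [← Finset.sum_sub_distrib]
    exact Finset.sum_congr rfl fun j _ => wp_term i j (a i) (b j)
  rw [hL]
  -- Step 2: RHS as a sum over the set T of pairs i < j
  set T := (S ×ˢ S).filter (fun p : ℕ × ℕ => p.1 < p.2) with hT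
  have hmaps : ∀ p ∈ T, p.1 + p.2 - 1 ∈ Finset.range (2 * n - 1) := by
    intro p hp
    rw [hT, Finset.mem_filter, hS] at hp
    simp only [Finset.mem_product, Finset.mem_range] at hp
    rw [Finset.mem_range]
    omega
  have hR : (∑ m ∈ Finset.range (2 * n - 1),
          C (∑ p ∈ (S ×ˢ S).filter
                (fun p => p.1 + p.2 = m + 1 ∧ p.1 < p.2),
              ((p.1 : ℤ) - (p.2 : ℤ)) • (a p.1 * b p.2 - a p.2 * b p.1))
            * X ^ m)
      = ∑ p ∈ T, C (((p.1 : ℤ) - (p.2 : ℤ)) • (a p.1 * b p.2 - a p.2 * b p.1))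
          * X ^ (p.1 + p.2 - 1) := by
    rw [← Finset.sum_fiberwise_of_maps_to (g := fun p : ℕ × ℕ => p.1 + p.2 - 1) hmaps
      (f := fun p : ℕ × ℕ =>
        C (((p.1 : ℤ) - (p.2 : ℤ)) • (a p.1 * b p.2 - a p.2 * b p.1)) * X ^ (p.1 + p.2 - 1))]
    refine Finset.sum_congr rfl fun m _ => ?_
    rw [map_sum, Finset.sum_mul]
    have hset : (S ×ˢ S).filter (fun p : ℕ × ℕ => p.1 + p.2 = m + 1 ∧ p.1 < p.2)
        = T.filter (fun p => p.1 + p.2 - 1 = m) := by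
      rw [hT, Finset.filter_filter]
      exact Finset.filter_congr fun p _ => by
        constructor
        · rintro ⟨h1, h2⟩; exact ⟨h2, by omega⟩
        · rintro ⟨h1, h2⟩; exact ⟨by omega, h1⟩
    rw [hset]
    refine Finset.sum_congr rfl fun p hp => ?_
    rw [Finset.mem_filter] at hp
    rw [hp.2]
  rw [hR]
  -- Step 3: split LHS over T, its swap, and the diagonal
  have hsplit : ∑ p ∈ S ×ˢ S, F p
      = (∑ p ∈ T, F p) + ∑ p ∈ T, F p.swap := by
    have h1 : S ×ˢ S = T ∪ ((S ×ˢ S).filter fun p : ℕ × ℕ => ¬ p.1 < p.2) := by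
      rw [hT, Finset.filter_union_filter_not_eq]
    rw [h1, Finset.sum_union (Finset.disjoint_filter_filter_not _ _ _)]
    congr 1
    have h2 : ((S ×ˢ S).filter fun p : ℕ × ℕ => ¬ p.1 < p.2)
        = ((S ×ˢ S).filter fun p : ℕ × ℕ => p.2 < p.1)
          ∪ ((S ×ˢ S).filter fun p : ℕ × ℕ => p.1 = p.2) := by
      rw [← Finset.filter_or]
      exact Finset.filter_congr fun p _ => by omega
    rw [h2, Finset.sum_union]
    · have hdiag : ∑ p ∈ (S ×ˢ S).filter (fun p : ℕ × ℕ => p.1 = p.2), F p = 0 := by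
        refine Finset.sum_eq_zero fun p hp => ?_
        rw [Finset.mem_filter] at hp
        rw [hF]
        simp [hp.2]
      rw [hdiag, add_zero]
      refine Finset.sum_nbij' (fun p => p.swap) (fun p => p.swap) ?_ ?_ ?_ ?_ ?_
      · intro p hp
        rw [Finset.mem_filter, Finset.mem_product] at hp
        rw [hT, Finset.mem_filter, Finset.mem_product]
        exact ⟨⟨hp.1.2, hp.1.1⟩, hp.2⟩
      · intro p hp
        rw [hT, Finset.mem_filter, Finset.mem_product] at hp
        rw [Finset.mem_filter, Finset.mem_product]
        exact ⟨⟨hp.1.2, hp.1.1⟩, hp.2⟩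
      · intro p _; rfl
      · intro p _; rfl
      · intro p _; rfl
    · rw [Finset.disjoint_filter]
      intro p _ h1 h2
      omega
  rw [hsplit, ← Finset.sum_add_distrib]
  refine Finset.sum_congr rfl fun p _ => ?_
  rw [hF]
  simp only [Prod.fst_swap, Prod.snd_swap]
  rw [Nat.add_comm p.2 p.1, ← add_mul, ← map_add]
  congr 2
  push_cast [zsmul_eq_mul]
  ring
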